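/- The coefficient of x^{n+2} in x³(72x^{10}+36x⁹+510x⁸-1117x⁷+1276x⁶-1155x⁵+710x⁴-293x³+81x²-13x+1)/((1-3x)(1-2x)³(1-x)⁷) equals (121·3^{n+1})/16 + 2^{n+2}(4n² - 125n + 741) + 3n⁶/40 - 9n⁵/10 - 7n⁴/2 - 133n³/2 - 1931n²/5 - 31727n/20 - 47739/16, for n sufficiently large. -/

import Mathlib

open PowerSeries

noncomputable def Kser (d : ℕ) : PowerSeries ℚ := mk fun m => ((d + m).choose d : ℚ)
noncomputable def Hser (d : ℕ) : PowerSeries ℚ := rescale 2 (Kser d)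
noncomputable def Gser : PowerSeries ℚ := rescale 3 (Kser 0)

lemma hK (d : ℕ) : Kser d * (1 - X)^(d+1) = 1 := by
  unfold Kser; exact mk_add_choose_mul_one_sub_pow_eq_one ℚ d

lemma rescale_one_sub (a : ℚ) : rescale a (1 - X) = 1 - C (R := ℚ) a * X := by
  rw [map_sub, map_one, rescale_X]

lemma hH (d : ℕ) : Hser d * (1 - 2*X)^(d+1) = 1 := by
  have h := congrArg (rescale (2:ℚ)) (hK d)
  rw [map_mul, map_pow, map_one, rescale_one_sub] at h
  simpa [Hser, map_ofNat] using h

lemma hG : Gser * (1 - 3*X) = 1 := by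
  have h := congrArg (rescale (3:ℚ)) (hK 0)
  rw [map_mul, map_pow, map_one, rescale_one_sub, pow_one] at h
  simpa [Gser, map_ofNat] using h

lemma coeff_K (d m : ℕ) : coeff (R := ℚ) m (Kser d) = ((d + m).choose d : ℚ) := by
  simp [Kser]

lemma coeff_H (d m : ℕ) : coeff (R := ℚ) m (Hser d) = 2^m * ((d + m).choose d : ℚ) := by
  simp [Hser, coeff_rescale, coeff_K]

lemma coeff_G (m : ℕ) : coeff (R := ℚ) m Gser = 3^m := by
  simp [Gser, coeff_rescale, coeff_K]

noncomputable def Tser : PowerSeries ℚ :=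
  C (R := ℚ) 121 * Gser + C (R := ℚ) 55296 * Hser 0 - C (R := ℚ) 7344 * Hser 1 + C (R := ℚ) 384 * Hser 2
  + C (R := ℚ) 4077 * Kser 0 - C (R := ℚ) 80946 * Kser 1 + C (R := ℚ) 93348 * Kser 2 - C (R := ℚ) 94968 * Kser 3
  + C (R := ℚ) 54720 * Kser 4 - C (R := ℚ) 19440 * Kser 5 + C (R := ℚ) 2592 * Kser 6
  - C (R := ℚ) 7840 - C (R := ℚ) 1344 * X - C (R := ℚ) 144 * X^2

lemma hT : Tser * ((1 - 3*X) * (1 - 2*X)^3 * (1 - X)^7) =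
    48 * (X ^ 3 * (72 * X ^ 10 + 36 * X ^ 9 + 510 * X ^ 8 - 1117 * X ^ 7 +
            1276 * X ^ 6 - 1155 * X ^ 5 + 710 * X ^ 4 - 293 * X ^ 3 +
            81 * X ^ 2 - 13 * X + 1) : PowerSeries ℚ) := by
  unfold Tser
  simp only [map_ofNat]
  linear_combination (norm := ring1)
      ((121:PowerSeries ℚ)*(1-2*X)^3*(1-X)^7) * hG
    + ((55296:PowerSeries ℚ)*(1-3*X)*(1-2*X)^2*(1-X)^7) * hH 0
    + ((-7344:PowerSeries ℚ)*(1-3*X)*(1-2*X)*(1-X)^7) * hH 1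
    + ((384:PowerSeries ℚ)*(1-3*X)*(1-X)^7) * hH 2
    + ((4077:PowerSeries ℚ)*(1-3*X)*(1-2*X)^3*(1-X)^6) * hK 0
    + ((-80946:PowerSeries ℚ)*(1-3*X)*(1-2*X)^3*(1-X)^5) * hK 1
    + ((93348:PowerSeries ℚ)*(1-3*X)*(1-2*X)^3*(1-X)^4) * hK 2
    + ((-94968:PowerSeries ℚ)*(1-3*X)*(1-2*X)^3*(1-X)^3) * hK 3
    + ((54720:PowerSeries ℚ)*(1-3*X)*(1-2*X)^3*(1-X)^2) * hK 4
    + ((-19440:PowerSeries ℚ)*(1-3*X)*(1-2*X)^3*(1-X)) * hK 5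
    + ((2592:PowerSeries ℚ)*(1-3*X)*(1-2*X)^3) * hK 6

lemma chooseq (d n : ℕ) :
    ((d + (n+2)).choose d : ℚ) * (Nat.factorial d : ℚ) = (Nat.ascFactorial (n+3) d : ℚ) := by
  have h := Nat.ascFactorial_eq_factorial_mul_choose (n+2) d
  rw [show d + (n+2) = n+2+d by ring]
  rw [show n+3 = n+2+1 by ring]
  exact_mod_cast ((Nat.mul_comm _ _).trans h.symm)

/-- Closed form for the total number of minimal inscribed 3D polyominoes of a
given volume: the coefficient of `x^{n+2}` in
`x³(72x¹⁰+36x⁹+510x⁸-1117x⁷+1276x⁶-1155x⁵+710x⁴-293x³+81x²-13x+1)/((1-3x)(1-2x)³(1-x)⁷)`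
equals `121·3^{n+1}/16 + 2^{n+2}(4n²-125n+741) + 3n⁶/40 - 9n⁵/10 - 7n⁴/2 - 133n³/2
 - 1931n²/5 - 31727n/20 - 47739/16` for `n ≥ 1`. -/
theorem p3dmin_count (n : ℕ) (hn : 1 ≤ n) :
    PowerSeries.coeff (R := ℚ) (n + 2)
        (X ^ 3 * (72 * X ^ 10 + 36 * X ^ 9 + 510 * X ^ 8 - 1117 * X ^ 7 +
            1276 * X ^ 6 - 1155 * X ^ 5 + 710 * X ^ 4 - 293 * X ^ 3 +
            81 * X ^ 2 - 13 * X + 1) *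
          ((1 - 3 * X) * (1 - 2 * X) ^ 3 * (1 - X) ^ 7)⁻¹ : PowerSeries ℚ) =
      121 * 3 ^ (n + 1) / 16 + 2 ^ (n + 2) * (4 * (n : ℚ) ^ 2 - 125 * (n : ℚ) + 741) +
        3 * (n : ℚ) ^ 6 / 40 - 9 * (n : ℚ) ^ 5 / 10 - 7 * (n : ℚ) ^ 4 / 2 -
        133 * (n : ℚ) ^ 3 / 2 - 1931 * (n : ℚ) ^ 2 / 5 - 31727 * (n : ℚ) / 20 -
        47739 / 16 := by
  have h0 : ¬ (n + 2 = 0) := by omega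
  have h1 : ¬ (n + 2 = 1) := by omega
  have h2 : ¬ (n + 2 = 2) := by omega
  set D : PowerSeries ℚ := (1 - 3 * X) * (1 - 2 * X) ^ 3 * (1 - X) ^ 7 with hDdef
  set N : PowerSeries ℚ := (72 * X ^ 10 + 36 * X ^ 9 + 510 * X ^ 8 - 1117 * X ^ 7 +
            1276 * X ^ 6 - 1155 * X ^ 5 + 710 * X ^ 4 - 293 * X ^ 3 +
            81 * X ^ 2 - 13 * X + 1) with hNdef
  have hDc : constantCoeff D ≠ 0 := by
    rw [hDdef]
    simp [map_ofNat]
  have hDinv : D * D⁻¹ = 1 := PowerSeries.mul_inv_cancel D hDc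
  have hP : C (R := ℚ) 48 * (X ^ 3 * N * D⁻¹) = Tser := by
    have step : C (R := ℚ) 48 * (X ^ 3 * N * D⁻¹) = (Tser * D) * D⁻¹ := by
      rw [hT, show (C (R := ℚ) 48 : PowerSeries ℚ) = 48 from map_ofNat _ 48, hNdef]
      ring
    rw [step, mul_assoc, hDinv, mul_one]
  have key := congrArg (coeff (R := ℚ) (n + 2)) hP
  rw [coeff_C_mul] at key
  rw [Tser] at key
  simp only [map_add, map_sub, coeff_C_mul, coeff_G, coeff_H, coeff_K, coeff_C,
    coeff_X, PowerSeries.coeff_X_pow, if_neg h0, if_neg h1, if_neg h2, mul_zero, sub_zero,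
    Nat.choose_zero_right, Nat.choose_one_right, Nat.cast_one, mul_one] at key
  have e2 : ((2 + (n+2)).choose 2 : ℚ) = ((n:ℚ)+3)*((n:ℚ)+4)/2 := by
    have h := chooseq 2 n
    simp only [Nat.ascFactorial, Nat.factorial] at h
    push_cast at h
    rw [eq_div_iff (by norm_num)]
    linear_combination h
  have e3 : ((3 + (n+2)).choose 3 : ℚ) = ((n:ℚ)+3)*((n:ℚ)+4)*((n:ℚ)+5)/6 := by
    have h := chooseq 3 n
    simp only [Nat.ascFactorial, Nat.factorial] at h
    push_cast at h
    rw [eq_div_iff (by norm_num)]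
    linear_combination h
  have e4 : ((4 + (n+2)).choose 4 : ℚ) = ((n:ℚ)+3)*((n:ℚ)+4)*((n:ℚ)+5)*((n:ℚ)+6)/24 := by
    have h := chooseq 4 n
    simp only [Nat.ascFactorial, Nat.factorial] at h
    push_cast at h
    rw [eq_div_iff (by norm_num)]
    linear_combination h
  have e5 : ((5 + (n+2)).choose 5 : ℚ)
      = ((n:ℚ)+3)*((n:ℚ)+4)*((n:ℚ)+5)*((n:ℚ)+6)*((n:ℚ)+7)/120 := by
    have h := chooseq 5 n
    simp only [Nat.ascFactorial, Nat.factorial] at h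
    push_cast at h
    rw [eq_div_iff (by norm_num)]
    linear_combination h
  have e6 : ((6 + (n+2)).choose 6 : ℚ)
      = ((n:ℚ)+3)*((n:ℚ)+4)*((n:ℚ)+5)*((n:ℚ)+6)*((n:ℚ)+7)*((n:ℚ)+8)/720 := by
    have h := chooseq 6 n
    simp only [Nat.ascFactorial, Nat.factorial] at h
    push_cast at h
    rw [eq_div_iff (by norm_num)]
    linear_combination h
  rw [e2, e3, e4, e5, e6] at key
  push_cast at key
  linear_combination key / 48
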